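/- Let K ⊆ K̂ ⊆ ℝⁿ be convex bodies, let f be an n-variate real polynomial, and let a ∈ K be a global minimizer of f on K. Assume K and K̂ are locally similar at a, i.e. there exists ε₁ > 0 with B_{ε₁}(a) ∩ K = B_{ε₁}(a) ∩ K̂. Let w be a weight function on K and ŵ a weight function on K̂ such that ŵ(x) ≥ w(x) for all x ∈ int(K), and suppose there exist ε₂ > 0 and m_a > 0 with m_a · ŵ(x) ≤ w(x) for all x ∈ B_{ε₂}(a) ∩ int(K). Then there exist an n-variate real polynomial g with g(a) = f(a), f(x) ≤ g(x) for all x ∈ K̂, g(x) ≥ f(a) for all x ∈ K̂, and an integer r₀ such that for all r ≥ r₀: g^{(r)}_{K,w} − f(a) ≤ (2/m_a) · (g^{(r)}_{K̂,ŵ} − f(a)). -/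

import Mathlib

open MeasureTheory

set_option maxHeartbeats 2000000

noncomputable section

/-- A polynomial is a sum of squares. -/
def IsSOS {n : ℕ} (q : MvPolynomial (Fin n) ℝ) : Prop :=
  ∃ (m : ℕ) (p : Fin m → MvPolynomial (Fin n) ℝ), q = ∑ i, p i ^ 2

/-- The Lasserre measure-based upper bound `f^{(r)}_{K,w}`: the infimum of
`∫_K f q w dx` over sum-of-squares polynomials `q` of degree at most `2r`
with `∫_K q w dx = 1`. -/
noncomputable def lasserre {n : ℕ} (r : ℕ) (K : Set (EuclideanSpace ℝ (Fin n)))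
    (w f : EuclideanSpace ℝ (Fin n) → ℝ) : ℝ :=
  sInf { v : ℝ | ∃ q : MvPolynomial (Fin n) ℝ, IsSOS q ∧ q.totalDegree ≤ 2 * r ∧
    (∫ x in K, MvPolynomial.eval (fun i => x i) q * w x) = 1 ∧
    v = ∫ x in K, f x * MvPolynomial.eval (fun i => x i) q * w x }

/-- The error `E^{(r)}_{K,w}(f) = f^{(r)}_{K,w} - min_{x ∈ K} f(x)`. -/
noncomputable def lasserreError {n : ℕ} (r : ℕ) (K : Set (EuclideanSpace ℝ (Fin n)))
    (w f : EuclideanSpace ℝ (Fin n) → ℝ) : ℝ :=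
  lasserre r K w f - sInf (f '' K)

/-- `w` is a weight function on `K`: continuous and positive on the interior of `K`,
with finite positive integral over `K`. -/
def IsWeightFn {n : ℕ} (K : Set (EuclideanSpace ℝ (Fin n)))
    (w : EuclideanSpace ℝ (Fin n) → ℝ) : Prop :=
  ContinuousOn w (interior K) ∧ (∀ x ∈ interior K, 0 < w x) ∧
    IntegrableOn w K ∧ 0 < ∫ x in K, w x

namespace Stmt9Aux

variable {n : ℕ}

lemma sos_nonneg {q : MvPolynomial (Fin n) ℝ} (hq : IsSOS q) (y : Fin n → ℝ) :
    0 ≤ MvPolynomial.eval y q := by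
  obtain ⟨m, p, rfl⟩ := hq
  rw [map_sum]
  exact Finset.sum_nonneg fun i _ => by rw [map_pow]; positivity

lemma sos_smul {q : MvPolynomial (Fin n) ℝ} (hq : IsSOS q) {c : ℝ} (hc : 0 ≤ c) :
    IsSOS (MvPolynomial.C c * q) := by
  obtain ⟨m, p, rfl⟩ := hq
  refine ⟨m, fun i => MvPolynomial.C (Real.sqrt c) * p i, ?_⟩
  rw [Finset.mul_sum]
  refine Finset.sum_congr rfl fun i _ => ?_
  rw [mul_pow, ← map_pow, Real.sq_sqrt hc]

lemma cont_eval (q : MvPolynomial (Fin n) ℝ) :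
    Continuous fun x : EuclideanSpace ℝ (Fin n) => MvPolynomial.eval (fun i => x i) q :=
  (MvPolynomial.continuous_eval q).comp
    (continuous_pi fun i => (continuous_apply i).comp (PiLp.continuous_ofLp (p := 2) (β := _)))

lemma mem_interior_of_not_frontier {S : Set (EuclideanSpace ℝ (Fin n))}
    {x : EuclideanSpace ℝ (Fin n)} (hx : x ∈ S) (hfx : x ∉ frontier S) : x ∈ interior S := by
  by_contra h
  exact hfx ⟨subset_closure hx, h⟩

lemma integrableOn_cmul {S : Set (EuclideanSpace ℝ (Fin n))} (hS : IsCompact S)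
    {φ ψ : EuclideanSpace ℝ (Fin n) → ℝ} (hφ : Continuous φ) (hψ : IntegrableOn ψ S) :
    IntegrableOn (fun x => φ x * ψ x) S := by
  obtain ⟨C, hC⟩ := hS.exists_bound_of_continuousOn hφ.continuousOn
  refine Integrable.bdd_mul (c := C) hψ hφ.aestronglyMeasurable.restrict ?_
  filter_upwards [ae_restrict_mem hS.isClosed.measurableSet] with x hx
  exact hC x hx

end Stmt9Aux

/-- Proposition (local similarity). -/
theorem stmt9 {n : ℕ}
    (K Khat : Set (EuclideanSpace ℝ (Fin n))) (hsub : K ⊆ Khat)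
    (hKc : IsCompact K) (hKconv : Convex ℝ K) (hKi : (interior K).Nonempty)
    (hKhc : IsCompact Khat) (hKhconv : Convex ℝ Khat) (hKhi : (interior Khat).Nonempty)
    (f : MvPolynomial (Fin n) ℝ)
    (F : EuclideanSpace ℝ (Fin n) → ℝ)
    (hF : ∀ x : EuclideanSpace ℝ (Fin n), F x = MvPolynomial.eval (fun i => x i) f)
    (a : EuclideanSpace ℝ (Fin n)) (ha : a ∈ K)
    (hmin : ∀ x ∈ K, F a ≤ F x)
    (ε₁ : ℝ) (hε₁ : 0 < ε₁)
    (hsim : Metric.closedBall a ε₁ ∩ K = Metric.closedBall a ε₁ ∩ Khat)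
    (w what : EuclideanSpace ℝ (Fin n) → ℝ)
    (hw : IsWeightFn K w) (hwhat : IsWeightFn Khat what)
    (hdom : ∀ x ∈ interior K, w x ≤ what x)
    (ma ε₂ : ℝ) (hma : 0 < ma) (hε₂ : 0 < ε₂)
    (hloc : ∀ x ∈ Metric.closedBall a ε₂ ∩ interior K, ma * what x ≤ w x) :
    ∃ g : MvPolynomial (Fin n) ℝ,
      MvPolynomial.eval (fun i => a i) g = F a ∧
      (∀ x ∈ Khat, F x ≤ MvPolynomial.eval (fun i => x i) g) ∧
      (∀ x ∈ Khat, F a ≤ MvPolynomial.eval (fun i => x i) g) ∧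
      ∃ r₀ : ℕ, ∀ r : ℕ, r₀ ≤ r →
        lasserre r K w (fun x => MvPolynomial.eval (fun i => x i) g) - F a ≤
          (2 / ma) *
            (lasserre r Khat what (fun x => MvPolynomial.eval (fun i => x i) g) - F a) := by
  obtain ⟨hwc, hwpos, hwint, hwIpos⟩ := hw
  obtain ⟨hvc, hvpos, hvint, hvIpos⟩ := hwhat
  have hKm : MeasurableSet K := hKc.isClosed.measurableSet
  have hKhm : MeasurableSet Khat := hKhc.isClosed.measurableSet
  have hfrK : ∀ᵐ x : EuclideanSpace ℝ (Fin n) ∂volume, x ∉ frontier K :=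
    measure_eq_zero_iff_ae_notMem.1 (hKconv.addHaar_frontier volume)
  have hfrKh : ∀ᵐ x : EuclideanSpace ℝ (Fin n) ∂volume, x ∉ frontier Khat :=
    measure_eq_zero_iff_ae_notMem.1 (hKhconv.addHaar_frontier volume)
  have haeK : ∀ S' : Set (EuclideanSpace ℝ (Fin n)), MeasurableSet S' → S' ⊆ K →
      ∀ᵐ x ∂volume.restrict S', x ∈ interior K := by
    intro S' hm hss
    filter_upwards [ae_restrict_mem hm, ae_restrict_of_ae hfrK] with x h1 h2
    exact Stmt9Aux.mem_interior_of_not_frontier (hss h1) h2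
  have haeKh : ∀ S' : Set (EuclideanSpace ℝ (Fin n)), MeasurableSet S' → S' ⊆ Khat →
      ∀ᵐ x ∂volume.restrict S', x ∈ interior Khat := by
    intro S' hm hss
    filter_upwards [ae_restrict_mem hm, ae_restrict_of_ae hfrKh] with x h1 h2
    exact Stmt9Aux.mem_interior_of_not_frontier (hss h1) h2
  -- the radius ε
  set ε : ℝ := min ε₁ (min ε₂ 1) with hε_def
  clear_value ε
  have hε : 0 < ε := by rw [hε_def]; exact lt_min hε₁ (lt_min hε₂ one_pos)
  have hεe1 : ε ≤ ε₁ := by rw [hε_def]; exact min_le_left _ _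
  have hεe2 : ε ≤ ε₂ := by rw [hε_def]; exact le_trans (min_le_right _ _) (min_le_left _ _)
  have hεle1 : ε ≤ 1 := by rw [hε_def]; exact le_trans (min_le_right _ _) (min_le_right _ _)
  have hBK : ∀ x : EuclideanSpace ℝ (Fin n), dist x a ≤ ε → (x ∈ K ↔ x ∈ Khat) := by
    intro x hx
    have hx1 : x ∈ Metric.closedBall a ε₁ := Metric.mem_closedBall.2 (hx.trans hεe1)
    constructor
    · intro h; exact ((Set.ext_iff.1 hsim x).1 ⟨hx1, h⟩).2
    · intro h; exact ((Set.ext_iff.1 hsim x).2 ⟨hx1, h⟩).2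
  have hFc : Continuous F := by
    have hFeq : F = fun x => MvPolynomial.eval (fun i => x i) f := funext hF
    rw [hFeq]; exact Stmt9Aux.cont_eval f
  -- the squared-distance polynomial
  set Np : MvPolynomial (Fin n) ℝ :=
    ∑ i : Fin n, (MvPolynomial.X i - MvPolynomial.C (a i)) ^ 2 with hNp_def
  clear_value Np
  set Nf : EuclideanSpace ℝ (Fin n) → ℝ := fun x => dist x a ^ 2 with hNf_def
  clear_value Nf
  have hNf0 : ∀ x, 0 ≤ Nf x := by rw [hNf_def]; exact fun x => sq_nonneg _
  have hNeval : ∀ x : EuclideanSpace ℝ (Fin n),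
      MvPolynomial.eval (fun i => x i) Np = Nf x := by
    intro x
    have h1 : Nf x = ∑ i, (x i - a i) ^ 2 := by
      rw [hNf_def]
      simp only
      rw [EuclideanSpace.dist_eq, Real.sq_sqrt (Finset.sum_nonneg fun i _ => sq_nonneg _)]
      exact Finset.sum_congr rfl fun i _ => by rw [Real.dist_eq, sq_abs]
    rw [h1, hNp_def, map_sum]
    exact Finset.sum_congr rfl fun i _ => by simp
  have hNfc : Continuous Nf := by
    rw [hNf_def]; exact (continuous_id.dist continuous_const).pow 2
  have hNfa : Nf a = 0 := by rw [hNf_def]; simp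
  -- bounds on Khat
  obtain ⟨MF, hMF⟩ := hKhc.exists_bound_of_continuousOn
    (f := fun x => F x - F a) (hFc.sub continuous_const).continuousOn
  have hMF0 : 0 ≤ MF := by simpa using hMF a (hsub ha)
  have hFlb : ∀ x ∈ Khat, F a - MF ≤ F x := by
    intro x hx
    have h1 := hMF x hx
    rw [Real.norm_eq_abs] at h1
    have h2 := abs_le.1 h1
    linarith [h2.1]
  have hFub : ∀ x ∈ Khat, F x ≤ F a + MF := by
    intro x hx
    have h1 := hMF x hx
    rw [Real.norm_eq_abs] at h1
    have h2 := abs_le.1 h1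
    linarith [h2.2]
  obtain ⟨R0, hR0⟩ := hKhc.exists_bound_of_continuousOn hNfc.continuousOn
  have hNle : ∀ x ∈ Khat, Nf x ≤ R0 := fun x hx =>
    (le_abs_self _).trans (by simpa [Real.norm_eq_abs] using hR0 x hx)
  have hR00 : 0 ≤ R0 := le_trans (hNf0 a) (hNle a (hsub ha))
  set R2 : ℝ := R0 + 1 with hR2_def
  clear_value R2
  have hR21 : (1 : ℝ) ≤ R2 := by rw [hR2_def]; linarith
  have hR2pos : (0 : ℝ) < R2 := by rw [hR2_def]; linarith
  -- interior point b near a and a small ball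
  obtain ⟨y, hy⟩ := hKhi
  set t0 : ℝ := min 1 (ε / (8 * (‖y - a‖ + 1))) with ht0_def
  clear_value t0
  have ht0pos : 0 < t0 := by rw [ht0_def]; exact lt_min one_pos (by positivity)
  have ht0le1 : t0 ≤ 1 := by rw [ht0_def]; exact min_le_left _ _
  have ht0le : t0 ≤ ε / (8 * (‖y - a‖ + 1)) := by rw [ht0_def]; exact min_le_right _ _
  have hb_int : a + t0 • (y - a) ∈ interior Khat :=
    hKhconv.add_smul_sub_mem_interior (hsub ha) hy ⟨ht0pos, ht0le1⟩
  set b : EuclideanSpace ℝ (Fin n) := a + t0 • (y - a) with hb_def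
  clear_value b
  have hba : dist b a ≤ ε / 8 := by
    have h1 : b - a = t0 • (y - a) := by rw [hb_def]; abel
    rw [dist_eq_norm, h1, norm_smul, Real.norm_eq_abs, abs_of_pos ht0pos]
    calc t0 * ‖y - a‖ ≤ (ε / (8 * (‖y - a‖ + 1))) * (‖y - a‖ + 1) := by
          apply mul_le_mul ht0le (by linarith) (norm_nonneg _) (by positivity)
      _ = ε / 8 := by
          have h2 : ‖y - a‖ + 1 ≠ 0 := by positivity
          field_simp
  obtain ⟨r1, hr1pos, hr1⟩ := Metric.isOpen_iff.1 isOpen_interior b hb_int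
  set ρ : ℝ := min (r1 / 2) (ε / 8) with hρ_def
  clear_value ρ
  have hρpos : 0 < ρ := by rw [hρ_def]; exact lt_min (by linarith) (by linarith)
  have hρler : ρ ≤ r1 / 2 := by rw [hρ_def]; exact min_le_left _ _
  have hρleε : ρ ≤ ε / 8 := by rw [hρ_def]; exact min_le_right _ _
  have hball_sub : Metric.closedBall b ρ ⊆ interior Khat :=
    (Metric.closedBall_subset_ball (lt_of_le_of_lt hρler (by linarith))).trans hr1
  have hballN : ∀ x ∈ Metric.closedBall b ρ, Nf x ≤ ε ^ 2 / 16 := by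
    intro x hx
    have hxb : dist x b ≤ ε / 8 := le_trans (Metric.mem_closedBall.1 hx) hρleε
    have h1 : dist x a ≤ ε / 4 := le_trans (dist_triangle x b a) (by linarith)
    calc Nf x = dist x a ^ 2 := by rw [hNf_def]
      _ ≤ (ε / 4) ^ 2 := pow_le_pow_left₀ dist_nonneg h1 2
      _ = ε ^ 2 / 16 := by ring
  obtain ⟨z, hz, hβ'⟩ := (isCompact_closedBall b ρ).exists_isMinOn
    ⟨b, Metric.mem_closedBall_self hρpos.le⟩ (hvc.mono hball_sub)
  set β : ℝ := what z with hβ_def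
  clear_value β
  have hβ : ∀ x ∈ Metric.closedBall b ρ, β ≤ what x := by
    rw [hβ_def]; exact fun x hx => hβ' hx
  have hβpos : 0 < β := by rw [hβ_def]; exact hvpos z (hball_sub hz)
  set Vr : ℝ := (volume (Metric.closedBall b ρ)).toReal with hVr_def
  clear_value Vr
  have hVrpos : 0 < Vr := by
    rw [hVr_def]
    exact ENNReal.toReal_pos (Metric.measure_closedBall_pos volume b hρpos).ne'
      measure_closedBall_lt_top.ne
  set Wh : ℝ := ∫ x in Khat, what x with hWh_def
  clear_value Wh
  have hWhpos : 0 < Wh := hvIpos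
  -- the functions u
  set u : EuclideanSpace ℝ (Fin n) → ℝ := fun x => 1 - Nf x / R2 with hu_def
  clear_value u
  have hu_nonneg : ∀ x ∈ Khat, 0 ≤ u x := by
    intro x hx
    have h1 : Nf x / R2 ≤ R0 / R2 := by gcongr; exact hNle x hx
    have h2 : R0 / R2 ≤ 1 := by rw [div_le_one hR2pos]; linarith
    simp only [hu_def]; linarith
  have hu_le1 : ∀ x ∈ Khat, u x ≤ 1 := by
    intro x hx
    have : 0 ≤ Nf x / R2 := div_nonneg (hNf0 x) hR2pos.le
    simp only [hu_def]; linarith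
  set u₁ : ℝ := 1 - ε ^ 2 / 16 / R2 with hu₁_def
  clear_value u₁
  set u₂ : ℝ := 1 - ε ^ 2 / 4 / R2 with hu₂_def
  clear_value u₂
  have hε2le1 : ε ^ 2 ≤ 1 := by
    calc ε ^ 2 ≤ 1 ^ 2 := pow_le_pow_left₀ hε.le hεle1 2
      _ = 1 := one_pow 2
  have hu₂pos : 0 < u₂ := by
    have h1 : ε ^ 2 / 4 / R2 ≤ ε ^ 2 / 4 := div_le_self (by positivity) hR21
    simp only [hu₂_def]; linarith
  have hu₂₁ : u₂ < u₁ := by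
    have h1 : u₁ - u₂ = (ε ^ 2 / 4 - ε ^ 2 / 16) / R2 := by
      simp only [hu₁_def, hu₂_def]; ring
    have h2 : (0:ℝ) < (ε ^ 2 / 4 - ε ^ 2 / 16) / R2 := by
      have h0 : 0 < ε ^ 2 := by positivity
      apply div_pos (by linarith) hR2pos
    linarith only [h1, h2]
  have hu₁pos : 0 < u₁ := hu₂pos.trans hu₂₁
  have hu₁le1 : u₁ ≤ 1 := by
    have : 0 ≤ ε ^ 2 / 16 / R2 := by positivity
    simp only [hu₁_def]; linarith
  have hu_ball : ∀ x ∈ Metric.closedBall b ρ, u₁ ≤ u x := by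
    intro x hx
    have h1 : Nf x / R2 ≤ ε ^ 2 / 16 / R2 := by gcongr; exact hballN x hx
    simp only [hu_def, hu₁_def]; linarith
  have hu_far : ∀ x, ε ^ 2 / 4 ≤ Nf x → u x ≤ u₂ := by
    intro x hx
    have h1 : ε ^ 2 / 4 / R2 ≤ Nf x / R2 := by gcongr
    simp only [hu_def, hu₂_def]; linarith
  -- choose m
  have hratlt : u₂ / u₁ < 1 := (div_lt_one hu₁pos).2 hu₂₁
  have hrat0 : 0 ≤ u₂ / u₁ := by positivity
  set κ : ℝ := ε ^ 2 / 8 * β * Vr / (R2 * Wh) with hκ_def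
  clear_value κ
  have hκpos : 0 < κ := by rw [hκ_def]; positivity
  obtain ⟨m, hm⟩ := exists_pow_lt_of_lt_one hκpos hratlt
  have hkey0 : (u₂ / u₁) ^ (2 * m) < κ :=
    lt_of_le_of_lt (pow_le_pow_of_le_one hrat0 hratlt.le (by omega)) hm
  have hkey : R2 * Wh * u₂ ^ (2 * m) ≤ ε ^ 2 / 8 * β * Vr * u₁ ^ (2 * m) := by
    have h1 : u₂ ^ (2 * m) < κ * u₁ ^ (2 * m) := by
      have h2 := hkey0
      rw [div_pow, div_lt_iff₀ (by positivity)] at h2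
      exact h2
    have h2 : κ * (R2 * Wh) = ε ^ 2 / 8 * β * Vr := by
      rw [hκ_def]; field_simp
    calc R2 * Wh * u₂ ^ (2 * m) ≤ R2 * Wh * (κ * u₁ ^ (2 * m)) := by
          apply mul_le_mul_of_nonneg_left h1.le (by positivity)
      _ = ε ^ 2 / 8 * β * Vr * u₁ ^ (2 * m) := by rw [← h2]; ring
  -- the polynomial q0 = pp²
  set pp : MvPolynomial (Fin n) ℝ := (1 - MvPolynomial.C R2⁻¹ * Np) ^ m with hpp_def
  clear_value pp
  set q0 : MvPolynomial (Fin n) ℝ := pp ^ 2 with hq0_def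
  clear_value q0
  have hq0eval : ∀ x : EuclideanSpace ℝ (Fin n),
      MvPolynomial.eval (fun i => x i) q0 = u x ^ (2 * m) := by
    intro x
    have h1 : MvPolynomial.eval (fun i => x i) pp = u x ^ m := by
      rw [hpp_def, map_pow, map_sub, map_one, map_mul, MvPolynomial.eval_C, hNeval]
      congr 1
      simp only [hu_def]
      rw [div_eq_inv_mul]
    rw [hq0_def, map_pow, h1, ← pow_mul, mul_comm m 2]
  have hq0sos : IsSOS q0 := ⟨1, fun _ => pp, by rw [Fin.sum_univ_one, hq0_def]⟩
  have hq0nn : ∀ x : EuclideanSpace ℝ (Fin n),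
      0 ≤ MvPolynomial.eval (fun i => x i) q0 := fun x => Stmt9Aux.sos_nonneg hq0sos _
  -- ch := ∫ q0 ŵ over Khat
  have hq0w_int : IntegrableOn
      (fun x => MvPolynomial.eval (fun i => x i) q0 * what x) Khat :=
    Stmt9Aux.integrableOn_cmul hKhc (Stmt9Aux.cont_eval q0) hvint
  have hwhat_ae0 : ∀ᵐ x ∂volume.restrict Khat, 0 ≤ what x := by
    filter_upwards [haeKh Khat hKhm subset_rfl] with x hx
    exact (hvpos x hx).le
  have hq0w_ae0 : 0 ≤ᵐ[volume.restrict Khat]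
      fun x => MvPolynomial.eval (fun i => x i) q0 * what x := by
    filter_upwards [hwhat_ae0] with x hx
    exact mul_nonneg (hq0nn x) hx
  set ch : ℝ := ∫ x in Khat, MvPolynomial.eval (fun i => x i) q0 * what x with hch_def
  clear_value ch
  have hch_lb : u₁ ^ (2 * m) * β * Vr ≤ ch := by
    have hsubKh : Metric.closedBall b ρ ⊆ Khat := hball_sub.trans interior_subset
    have step1 : u₁ ^ (2 * m) * β * Vr =
        ∫ _ in Metric.closedBall b ρ, u₁ ^ (2 * m) * β := by
      rw [setIntegral_const, smul_eq_mul, hVr_def, measureReal_def]; ring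
    have step2 : (∫ _ in Metric.closedBall b ρ, u₁ ^ (2 * m) * β) ≤
        ∫ x in Metric.closedBall b ρ, MvPolynomial.eval (fun i => x i) q0 * what x := by
      apply setIntegral_mono_on
        (integrableOn_const measure_closedBall_lt_top.ne)
        (hq0w_int.mono_set hsubKh) measurableSet_closedBall
      intro x hx
      rw [hq0eval]
      apply mul_le_mul (pow_le_pow_left₀ hu₁pos.le (hu_ball x hx) _) (hβ x hx) hβpos.le
        (pow_nonneg (hu_nonneg x (hsubKh hx)) _)
    have step3 : (∫ x in Metric.closedBall b ρ,
        MvPolynomial.eval (fun i => x i) q0 * what x) ≤ ch := by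
      rw [hch_def]
      exact setIntegral_mono_set hq0w_int hq0w_ae0 hsubKh.eventuallyLE
    linarith
  have hchpos : 0 < ch := lt_of_lt_of_le (by positivity) hch_lb
  -- the key concentration bound
  have hNq0_int : IntegrableOn
      (fun x => Nf x * (MvPolynomial.eval (fun i => x i) q0 * what x)) Khat :=
    Stmt9Aux.integrableOn_cmul hKhc hNfc hq0w_int
  have hkeyint : (∫ x in Khat, Nf x * (MvPolynomial.eval (fun i => x i) q0 * what x)) ≤
      3 * ε ^ 2 / 8 * ch := by
    have hb1 : ∀ᵐ x ∂volume.restrict Khat,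
        Nf x * (MvPolynomial.eval (fun i => x i) q0 * what x) ≤
        ε ^ 2 / 4 * (MvPolynomial.eval (fun i => x i) q0 * what x) +
        (R2 * u₂ ^ (2 * m)) * what x := by
      filter_upwards [haeKh Khat hKhm subset_rfl, ae_restrict_mem hKhm] with x hxi hxK
      have hwx : 0 ≤ what x := (hvpos x hxi).le
      by_cases hc : Nf x ≤ ε ^ 2 / 4
      · have h2 : 0 ≤ (R2 * u₂ ^ (2 * m)) * what x := by positivity
        have h3 : Nf x * (MvPolynomial.eval (fun i => x i) q0 * what x) ≤
            ε ^ 2 / 4 * (MvPolynomial.eval (fun i => x i) q0 * what x) :=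
          mul_le_mul_of_nonneg_right hc (mul_nonneg (hq0nn x) hwx)
        linarith only [h2, h3]
      · push_neg at hc
        have h4 : MvPolynomial.eval (fun i => x i) q0 ≤ u₂ ^ (2 * m) := by
          rw [hq0eval]
          exact pow_le_pow_left₀ (hu_nonneg x hxK) (hu_far x hc.le) _
        have h5 : Nf x ≤ R2 := by have := hNle x hxK; linarith
        have h6 : 0 ≤ ε ^ 2 / 4 * (MvPolynomial.eval (fun i => x i) q0 * what x) := by
          have := hq0nn x; positivity
        have h7 : Nf x * (MvPolynomial.eval (fun i => x i) q0 * what x) ≤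
            (R2 * u₂ ^ (2 * m)) * what x := by
          have h8 : Nf x * MvPolynomial.eval (fun i => x i) q0 ≤ R2 * u₂ ^ (2 * m) :=
            mul_le_mul h5 h4 (hq0nn x) hR2pos.le
          calc Nf x * (MvPolynomial.eval (fun i => x i) q0 * what x)
              = (Nf x * MvPolynomial.eval (fun i => x i) q0) * what x := by ring
            _ ≤ (R2 * u₂ ^ (2 * m)) * what x := mul_le_mul_of_nonneg_right h8 hwx
        linarith only [h6, h7]
    have step1 : (∫ x in Khat, Nf x * (MvPolynomial.eval (fun i => x i) q0 * what x)) ≤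
        ∫ x in Khat, (ε ^ 2 / 4 * (MvPolynomial.eval (fun i => x i) q0 * what x) +
          (R2 * u₂ ^ (2 * m)) * what x) :=
      setIntegral_mono_ae_restrict hNq0_int
        ((hq0w_int.const_mul _).add (hvint.const_mul _)) hb1
    have step2 : (∫ x in Khat, (ε ^ 2 / 4 * (MvPolynomial.eval (fun i => x i) q0 * what x) +
        (R2 * u₂ ^ (2 * m)) * what x)) = ε ^ 2 / 4 * ch + R2 * u₂ ^ (2 * m) * Wh := by
      rw [integral_add (hq0w_int.const_mul _) (hvint.const_mul _),
        integral_const_mul, integral_const_mul, ← hch_def, ← hWh_def]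
    have step3 : R2 * u₂ ^ (2 * m) * Wh ≤ ε ^ 2 / 8 * ch := by
      have h1 : R2 * u₂ ^ (2 * m) * Wh = R2 * Wh * u₂ ^ (2 * m) := by ring
      have h2 : ε ^ 2 / 8 * β * Vr * u₁ ^ (2 * m) =
          ε ^ 2 / 8 * (u₁ ^ (2 * m) * β * Vr) := by ring
      have h3 : ε ^ 2 / 8 * (u₁ ^ (2 * m) * β * Vr) ≤ ε ^ 2 / 8 * ch :=
        mul_le_mul_of_nonneg_left hch_lb (by positivity)
      linarith [hkey]
    linarith
  -- the constants for g
  set Cc : ℝ := 12 * (MF + 1) / ε ^ 2 with hCc_def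
  clear_value Cc
  have hCcpos : 0 < Cc := by rw [hCc_def]; positivity
  have hCcε : Cc * ε ^ 2 = 12 * (MF + 1) := by
    rw [hCc_def]; field_simp
  set δ : ℝ := 12 * (MF + 1) - MF with hδ_def
  clear_value δ
  have hδpos : 0 < δ := by rw [hδ_def]; linarith
  -- the polynomial g
  set gP : MvPolynomial (Fin n) ℝ := f + MvPolynomial.C Cc * Np with hgP_def
  clear_value gP
  have hG : ∀ x : EuclideanSpace ℝ (Fin n),
      MvPolynomial.eval (fun i => x i) gP = F x + Cc * Nf x := by
    intro x
    rw [hgP_def, map_add, map_mul, MvPolynomial.eval_C, hNeval, ← hF]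
  have hga : MvPolynomial.eval (fun i => a i) gP = F a := by
    rw [hG a, hNfa]; ring
  have hgF : ∀ x ∈ Khat, F x ≤ MvPolynomial.eval (fun i => x i) gP := by
    intro x _
    rw [hG x]
    linarith [mul_nonneg hCcpos.le (hNf0 x)]
  have hgmin : ∀ x ∈ Khat, F a ≤ MvPolynomial.eval (fun i => x i) gP := by
    intro x hx
    rw [hG x]
    by_cases hd : dist x a ≤ ε₁
    · have hxK : x ∈ K := ((Set.ext_iff.1 hsim x).2 ⟨Metric.mem_closedBall.2 hd, hx⟩).2
      have h1 := hmin x hxK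
      linarith [mul_nonneg hCcpos.le (hNf0 x)]
    · push_neg at hd
      have hN : ε ^ 2 ≤ Nf x := by
        have h1 : ε ≤ dist x a := le_trans hεe1 hd.le
        calc ε ^ 2 ≤ dist x a ^ 2 := pow_le_pow_left₀ hε.le h1 2
          _ = Nf x := by rw [hNf_def]
      have h1 := hFlb x hx
      have h2 : Cc * ε ^ 2 ≤ Cc * Nf x := mul_le_mul_of_nonneg_left hN hCcpos.le
      rw [hCcε] at h2
      linarith
  have hδ_bound : ∀ x ∈ Khat, ε < dist x a →
      F a + δ ≤ MvPolynomial.eval (fun i => x i) gP := by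
    intro x hx hd
    rw [hG x]
    have hN : ε ^ 2 ≤ Nf x := by
      calc ε ^ 2 ≤ dist x a ^ 2 := pow_le_pow_left₀ hε.le hd.le 2
        _ = Nf x := by rw [hNf_def]
    have h2 : Cc * ε ^ 2 ≤ Cc * Nf x := mul_le_mul_of_nonneg_left hN hCcpos.le
    rw [hCcε] at h2
    by_cases hd1 : dist x a ≤ ε₁
    · have hxK : x ∈ K := ((Set.ext_iff.1 hsim x).2 ⟨Metric.mem_closedBall.2 hd1, hx⟩).2
      have h1 := hmin x hxK
      simp only [hδ_def]
      linarith
    · have h1 := hFlb x hx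
      simp only [hδ_def]
      linarith
  -- the normalized SOS polynomial qs
  set qs : MvPolynomial (Fin n) ℝ := MvPolynomial.C ch⁻¹ * q0 with hqs_def
  clear_value qs
  have hqss : IsSOS qs := by
    rw [hqs_def]; exact Stmt9Aux.sos_smul hq0sos (inv_nonneg.2 hchpos.le)
  have hqseval : ∀ x : EuclideanSpace ℝ (Fin n),
      MvPolynomial.eval (fun i => x i) qs =
        ch⁻¹ * MvPolynomial.eval (fun i => x i) q0 := by
    intro x; rw [hqs_def, map_mul, MvPolynomial.eval_C]
  have hqs_feas : (∫ x in Khat, MvPolynomial.eval (fun i => x i) qs * what x) = 1 := by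
    have heq : ∀ x : EuclideanSpace ℝ (Fin n),
        MvPolynomial.eval (fun i => x i) qs * what x =
        ch⁻¹ * (MvPolynomial.eval (fun i => x i) q0 * what x) := by
      intro x; rw [hqseval]; ring
    simp only [heq]
    rw [integral_const_mul, ← hch_def, inv_mul_cancel₀ hchpos.ne']
  -- value of qs
  have hGq0_int : IntegrableOn (fun x =>
      (MvPolynomial.eval (fun i => x i) gP) *
      (MvPolynomial.eval (fun i => x i) q0 * what x)) Khat :=
    Stmt9Aux.integrableOn_cmul hKhc (Stmt9Aux.cont_eval gP) hq0w_int
  have hGmq0_int : IntegrableOn (fun x =>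
      (MvPolynomial.eval (fun i => x i) gP - F a) *
      (MvPolynomial.eval (fun i => x i) q0 * what x)) Khat :=
    Stmt9Aux.integrableOn_cmul hKhc ((Stmt9Aux.cont_eval gP).sub continuous_const) hq0w_int
  have hFmq0_int : IntegrableOn (fun x =>
      (F x - F a) * (MvPolynomial.eval (fun i => x i) q0 * what x)) Khat :=
    Stmt9Aux.integrableOn_cmul hKhc (hFc.sub continuous_const) hq0w_int
  have hI0 : (∫ x in Khat, (MvPolynomial.eval (fun i => x i) gP - F a) *
      (MvPolynomial.eval (fun i => x i) q0 * what x)) ≤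
      MF * ch + Cc * (3 * ε ^ 2 / 8 * ch) := by
    have heq : ∀ x : EuclideanSpace ℝ (Fin n),
        (MvPolynomial.eval (fun i => x i) gP - F a) *
          (MvPolynomial.eval (fun i => x i) q0 * what x) =
        (F x - F a) * (MvPolynomial.eval (fun i => x i) q0 * what x) +
          Cc * (Nf x * (MvPolynomial.eval (fun i => x i) q0 * what x)) := by
      intro x; rw [hG x]; ring
    simp only [heq]
    rw [integral_add hFmq0_int (hNq0_int.const_mul Cc), integral_const_mul]
    have step1 : (∫ x in Khat,
        (F x - F a) * (MvPolynomial.eval (fun i => x i) q0 * what x)) ≤ MF * ch := by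
      have hmono : (∫ x in Khat,
          (F x - F a) * (MvPolynomial.eval (fun i => x i) q0 * what x)) ≤
          ∫ x in Khat, MF * (MvPolynomial.eval (fun i => x i) q0 * what x) := by
        apply setIntegral_mono_ae_restrict hFmq0_int (hq0w_int.const_mul MF)
        filter_upwards [ae_restrict_mem hKhm, hq0w_ae0] with x hxK hq0w
        exact mul_le_mul_of_nonneg_right (by linarith [hFub x hxK]) hq0w
      rw [integral_const_mul, ← hch_def] at hmono
      exact hmono
    have step2 : Cc * (∫ x in Khat,
        Nf x * (MvPolynomial.eval (fun i => x i) q0 * what x)) ≤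
        Cc * (3 * ε ^ 2 / 8 * ch) := mul_le_mul_of_nonneg_left hkeyint hCcpos.le
    linarith
  -- vstar and its bound
  set vstar : ℝ := ∫ x in Khat, (MvPolynomial.eval (fun i => x i) gP) *
      (MvPolynomial.eval (fun i => x i) qs) * what x with hvstar_def
  clear_value vstar
  have hvstar_eq : vstar - F a = ch⁻¹ * ∫ x in Khat,
      (MvPolynomial.eval (fun i => x i) gP - F a) *
      (MvPolynomial.eval (fun i => x i) q0 * what x) := by
    have heq : ∀ x : EuclideanSpace ℝ (Fin n),
        (MvPolynomial.eval (fun i => x i) gP) *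
          (MvPolynomial.eval (fun i => x i) qs) * what x =
        ch⁻¹ * ((MvPolynomial.eval (fun i => x i) gP) *
          (MvPolynomial.eval (fun i => x i) q0 * what x)) := by
      intro x; rw [hqseval]; ring
    have heq2 : ∀ x : EuclideanSpace ℝ (Fin n),
        (MvPolynomial.eval (fun i => x i) gP - F a) *
          (MvPolynomial.eval (fun i => x i) q0 * what x) =
        (MvPolynomial.eval (fun i => x i) gP) *
          (MvPolynomial.eval (fun i => x i) q0 * what x) -
        F a * (MvPolynomial.eval (fun i => x i) q0 * what x) := by
      intro x; ring
    rw [hvstar_def]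
    simp only [heq, heq2]
    rw [integral_const_mul, integral_sub hGq0_int (hq0w_int.const_mul (F a)),
      integral_const_mul, ← hch_def]
    field_simp
  have hvstar_le : vstar - F a ≤ δ / 2 := by
    rw [hvstar_eq]
    have h1 : ch⁻¹ * (∫ x in Khat, (MvPolynomial.eval (fun i => x i) gP - F a) *
        (MvPolynomial.eval (fun i => x i) q0 * what x)) ≤
        ch⁻¹ * (MF * ch + Cc * (3 * ε ^ 2 / 8 * ch)) :=
      mul_le_mul_of_nonneg_left hI0 (inv_nonneg.2 hchpos.le)
    have h2 : ch⁻¹ * (MF * ch + Cc * (3 * ε ^ 2 / 8 * ch)) = MF + 3 / 8 * (Cc * ε ^ 2) := by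
      field_simp
    rw [h2, hCcε] at h1
    simp only [hδ_def]
    linarith
  -- now give the answer
  refine ⟨gP, hga, hgF, hgmin, qs.totalDegree, ?_⟩
  intro r hr
  -- the core estimate
  have core : ∀ q : MvPolynomial (Fin n) ℝ, IsSOS q → q.totalDegree ≤ 2 * r →
      (∫ x in Khat, MvPolynomial.eval (fun i => x i) q * what x) = 1 →
      (∫ x in Khat, (MvPolynomial.eval (fun i => x i) gP) *
        MvPolynomial.eval (fun i => x i) q * what x) - F a ≤ δ / 2 →
      lasserre r K w (fun x => MvPolynomial.eval (fun i => x i) gP) ≤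
        F a + (2 / ma) * ((∫ x in Khat, (MvPolynomial.eval (fun i => x i) gP) *
          MvPolynomial.eval (fun i => x i) q * what x) - F a) := by
    intro q hqsos hqdeg hqfeas hqle
    set t : ℝ := (∫ x in Khat, (MvPolynomial.eval (fun i => x i) gP) *
        MvPolynomial.eval (fun i => x i) q * what x) - F a with ht_def
    clear_value t
    have hqnn : ∀ x : EuclideanSpace ℝ (Fin n),
        0 ≤ MvPolynomial.eval (fun i => x i) q := fun x => Stmt9Aux.sos_nonneg hqsos _
    have hIqwh : IntegrableOn
        (fun x => MvPolynomial.eval (fun i => x i) q * what x) Khat :=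
      Stmt9Aux.integrableOn_cmul hKhc (Stmt9Aux.cont_eval q) hvint
    have hIGqwh : IntegrableOn (fun x =>
        (MvPolynomial.eval (fun i => x i) gP) *
        MvPolynomial.eval (fun i => x i) q * what x) Khat :=
      Stmt9Aux.integrableOn_cmul hKhc
        ((Stmt9Aux.cont_eval gP).mul (Stmt9Aux.cont_eval q)) hvint
    have hIGmqwh : IntegrableOn (fun x =>
        (MvPolynomial.eval (fun i => x i) gP - F a) *
        MvPolynomial.eval (fun i => x i) q * what x) Khat :=
      Stmt9Aux.integrableOn_cmul hKhc
        (((Stmt9Aux.cont_eval gP).sub continuous_const).mul (Stmt9Aux.cont_eval q)) hvint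
    have hqwh_ae0 : 0 ≤ᵐ[volume.restrict Khat]
        fun x => MvPolynomial.eval (fun i => x i) q * what x := by
      filter_upwards [hwhat_ae0] with x hx
      exact mul_nonneg (hqnn x) hx
    have hGmqwh_ae0 : 0 ≤ᵐ[volume.restrict Khat]
        fun x => (MvPolynomial.eval (fun i => x i) gP - F a) *
          MvPolynomial.eval (fun i => x i) q * what x := by
      filter_upwards [hwhat_ae0, ae_restrict_mem hKhm] with x hx hxK
      exact mul_nonneg (mul_nonneg (sub_nonneg.2 (hgmin x hxK)) (hqnn x)) hx
    have hteq : (∫ x in Khat, (MvPolynomial.eval (fun i => x i) gP - F a) *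
        MvPolynomial.eval (fun i => x i) q * what x) = t := by
      have heq : ∀ x : EuclideanSpace ℝ (Fin n),
          (MvPolynomial.eval (fun i => x i) gP - F a) *
            MvPolynomial.eval (fun i => x i) q * what x =
          (MvPolynomial.eval (fun i => x i) gP) *
            MvPolynomial.eval (fun i => x i) q * what x -
          F a * (MvPolynomial.eval (fun i => x i) q * what x) := by
        intro x; ring
      simp only [heq]
      rw [integral_sub hIGqwh (hIqwh.const_mul (F a)), integral_const_mul, hqfeas, ht_def]
      ring
    have ht0 : 0 ≤ t := by
      rw [← hteq]
      exact setIntegral_nonneg_of_ae_restrict hGmqwh_ae0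
    -- mass outside the ball B = closedBall a ε
    have hout : δ * (∫ x in Khat \ Metric.closedBall a ε,
        MvPolynomial.eval (fun i => x i) q * what x) ≤ t := by
      have step1 : (∫ x in Khat \ Metric.closedBall a ε,
          δ * (MvPolynomial.eval (fun i => x i) q * what x)) ≤
          ∫ x in Khat \ Metric.closedBall a ε,
            (MvPolynomial.eval (fun i => x i) gP - F a) *
            MvPolynomial.eval (fun i => x i) q * what x := by
        apply setIntegral_mono_ae_restrict
          ((hIqwh.mono_set Set.diff_subset).const_mul δ)
          (hIGmqwh.mono_set Set.diff_subset)
        filter_upwards [ae_restrict_mem (hKhm.diff measurableSet_closedBall),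
          haeKh (Khat \ Metric.closedBall a ε) (hKhm.diff measurableSet_closedBall)
            Set.diff_subset] with x hx hxi
        have hdx : ε < dist x a := by
          have := hx.2
          simp only [Metric.mem_closedBall] at this
          linarith [not_le.1 this]
        have h1 := hδ_bound x hx.1 hdx
        have h2 : 0 ≤ MvPolynomial.eval (fun i => x i) q * what x :=
          mul_nonneg (hqnn x) (hvpos x hxi).le
        calc δ * (MvPolynomial.eval (fun i => x i) q * what x) ≤
            (MvPolynomial.eval (fun i => x i) gP - F a) *
              (MvPolynomial.eval (fun i => x i) q * what x) :=
              mul_le_mul_of_nonneg_right (by linarith) h2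
          _ = (MvPolynomial.eval (fun i => x i) gP - F a) *
              MvPolynomial.eval (fun i => x i) q * what x := by ring
      have step2 : (∫ x in Khat \ Metric.closedBall a ε,
          (MvPolynomial.eval (fun i => x i) gP - F a) *
          MvPolynomial.eval (fun i => x i) q * what x) ≤ t := by
        rw [← hteq]
        exact setIntegral_mono_set hIGmqwh hGmqwh_ae0 Set.diff_subset.eventuallyLE
      rw [integral_const_mul] at step1
      linarith
    have hsplit := integral_inter_add_diff (s := Khat) (t := Metric.closedBall a ε)
      measurableSet_closedBall hIqwh
    rw [hqfeas] at hsplit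
    have hout2 : (∫ x in Khat \ Metric.closedBall a ε,
        MvPolynomial.eval (fun i => x i) q * what x) ≤ t / δ := by
      rw [le_div_iff₀ hδpos]
      linarith [hout]
    have htδ : t / δ ≤ 1 / 2 := by
      rw [div_le_iff₀ hδpos]
      linarith [hqle]
    have hin : 1 / 2 ≤ ∫ x in Khat ∩ Metric.closedBall a ε,
        MvPolynomial.eval (fun i => x i) q * what x := by linarith
    -- identify the ball intersections
    have hKB : Khat ∩ Metric.closedBall a ε = K ∩ Metric.closedBall a ε := by
      ext x
      constructor
      · rintro ⟨h1, h2⟩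
        exact ⟨(hBK x (Metric.mem_closedBall.1 h2)).2 h1, h2⟩
      · rintro ⟨h1, h2⟩
        exact ⟨(hBK x (Metric.mem_closedBall.1 h2)).1 h1, h2⟩
    have hIqwK : IntegrableOn
        (fun x => MvPolynomial.eval (fun i => x i) q * w x) K :=
      Stmt9Aux.integrableOn_cmul hKc (Stmt9Aux.cont_eval q) hwint
    set c : ℝ := ∫ x in K, MvPolynomial.eval (fun i => x i) q * w x with hc_def
    clear_value c
    have hc_lb : ma * (∫ x in Khat ∩ Metric.closedBall a ε,
        MvPolynomial.eval (fun i => x i) q * what x) ≤ c := by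
      have step1 : ma * (∫ x in Khat ∩ Metric.closedBall a ε,
          MvPolynomial.eval (fun i => x i) q * what x) =
          ∫ x in K ∩ Metric.closedBall a ε,
            ma * (MvPolynomial.eval (fun i => x i) q * what x) := by
        rw [hKB, integral_const_mul]
      have step2 : (∫ x in K ∩ Metric.closedBall a ε,
          ma * (MvPolynomial.eval (fun i => x i) q * what x)) ≤
          ∫ x in K ∩ Metric.closedBall a ε,
            MvPolynomial.eval (fun i => x i) q * w x := by
        apply setIntegral_mono_ae_restrict
          ((hIqwh.mono_set (Set.inter_subset_left.trans hsub)).const_mul ma)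
          (hIqwK.mono_set Set.inter_subset_left)
        filter_upwards [ae_restrict_mem (hKm.inter measurableSet_closedBall),
          haeK (K ∩ Metric.closedBall a ε) (hKm.inter measurableSet_closedBall)
            Set.inter_subset_left] with x hx hxi
        have hdx : x ∈ Metric.closedBall a ε₂ :=
          Metric.mem_closedBall.2 ((Metric.mem_closedBall.1 hx.2).trans hεe2)
        have hlocx := hloc x ⟨hdx, hxi⟩
        calc ma * (MvPolynomial.eval (fun i => x i) q * what x) =
            MvPolynomial.eval (fun i => x i) q * (ma * what x) := by ring
          _ ≤ MvPolynomial.eval (fun i => x i) q * w x :=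
            mul_le_mul_of_nonneg_left hlocx (hqnn x)
      have hqwK_ae0 : 0 ≤ᵐ[volume.restrict K]
          fun x => MvPolynomial.eval (fun i => x i) q * w x := by
        filter_upwards [haeK K hKm subset_rfl] with x hx
        exact mul_nonneg (hqnn x) (hwpos x hx).le
      have step3 : (∫ x in K ∩ Metric.closedBall a ε,
          MvPolynomial.eval (fun i => x i) q * w x) ≤ c := by
        rw [hc_def]
        exact setIntegral_mono_set hIqwK hqwK_ae0 Set.inter_subset_left.eventuallyLE
      linarith
    have hc_half : ma / 2 ≤ c := by
      have h1 : ma * (1 / 2) ≤ ma * (∫ x in Khat ∩ Metric.closedBall a ε,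
          MvPolynomial.eval (fun i => x i) q * what x) :=
        mul_le_mul_of_nonneg_left hin hma.le
      linarith
    have hcpos : 0 < c := lt_of_lt_of_le (by linarith) hc_half
    -- the scaled polynomial is feasible for (K, w)
    have hq'sos : IsSOS (MvPolynomial.C c⁻¹ * q) :=
      Stmt9Aux.sos_smul hqsos (inv_nonneg.2 hcpos.le)
    have hq'deg : (MvPolynomial.C c⁻¹ * q).totalDegree ≤ 2 * r := by
      refine le_trans (MvPolynomial.totalDegree_mul _ _) ?_
      simpa [MvPolynomial.totalDegree_C] using hqdeg
    have hq'eval : ∀ x : EuclideanSpace ℝ (Fin n),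
        MvPolynomial.eval (fun i => x i) (MvPolynomial.C c⁻¹ * q) =
          c⁻¹ * MvPolynomial.eval (fun i => x i) q := by
      intro x; rw [map_mul, MvPolynomial.eval_C]
    have hq'feas : (∫ x in K,
        MvPolynomial.eval (fun i => x i) (MvPolynomial.C c⁻¹ * q) * w x) = 1 := by
      have heq : ∀ x : EuclideanSpace ℝ (Fin n),
          MvPolynomial.eval (fun i => x i) (MvPolynomial.C c⁻¹ * q) * w x =
          c⁻¹ * (MvPolynomial.eval (fun i => x i) q * w x) := by
        intro x; rw [hq'eval]; ring
      simp only [heq]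
      rw [integral_const_mul, ← hc_def, inv_mul_cancel₀ hcpos.ne']
    -- lower bound of the feasible values over K
    have hLbdd : ∀ v ∈ { v : ℝ | ∃ q' : MvPolynomial (Fin n) ℝ, IsSOS q' ∧
        q'.totalDegree ≤ 2 * r ∧
        (∫ x in K, MvPolynomial.eval (fun i => x i) q' * w x) = 1 ∧
        v = ∫ x in K, (fun x => MvPolynomial.eval (fun i => x i) gP) x *
          MvPolynomial.eval (fun i => x i) q' * w x }, F a ≤ v := by
      rintro v ⟨q', hs', _, hf', rfl⟩
      have hqnn' : ∀ x : EuclideanSpace ℝ (Fin n),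
          0 ≤ MvPolynomial.eval (fun i => x i) q' := fun x => Stmt9Aux.sos_nonneg hs' _
      have hIq'w : IntegrableOn
          (fun x => MvPolynomial.eval (fun i => x i) q' * w x) K :=
        Stmt9Aux.integrableOn_cmul hKc (Stmt9Aux.cont_eval q') hwint
      have hIGq'w : IntegrableOn (fun x =>
          (MvPolynomial.eval (fun i => x i) gP) *
          MvPolynomial.eval (fun i => x i) q' * w x) K :=
        Stmt9Aux.integrableOn_cmul hKc
          ((Stmt9Aux.cont_eval gP).mul (Stmt9Aux.cont_eval q')) hwint
      have hmono : (∫ x in K, F a * (MvPolynomial.eval (fun i => x i) q' * w x)) ≤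
          ∫ x in K, (MvPolynomial.eval (fun i => x i) gP) *
            MvPolynomial.eval (fun i => x i) q' * w x := by
        apply setIntegral_mono_ae_restrict (hIq'w.const_mul (F a)) hIGq'w
        filter_upwards [ae_restrict_mem hKm, haeK K hKm subset_rfl] with x hxK hxi
        have h1 := hgmin x (hsub hxK)
        have h2 : 0 ≤ MvPolynomial.eval (fun i => x i) q' * w x :=
          mul_nonneg (hqnn' x) (hwpos x hxi).le
        calc F a * (MvPolynomial.eval (fun i => x i) q' * w x) ≤
            (MvPolynomial.eval (fun i => x i) gP) *
              (MvPolynomial.eval (fun i => x i) q' * w x) :=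
            mul_le_mul_of_nonneg_right h1 h2
          _ = (MvPolynomial.eval (fun i => x i) gP) *
              MvPolynomial.eval (fun i => x i) q' * w x := by ring
      rw [integral_const_mul, hf', mul_one] at hmono
      simpa using hmono
    -- lasserre over K is at most the value of the scaled polynomial
    have hLle : lasserre r K w (fun x => MvPolynomial.eval (fun i => x i) gP) ≤
        ∫ x in K, (MvPolynomial.eval (fun i => x i) gP) *
          MvPolynomial.eval (fun i => x i) (MvPolynomial.C c⁻¹ * q) * w x := by
      rw [lasserre]
      apply csInf_le ⟨F a, hLbdd⟩
      exact ⟨MvPolynomial.C c⁻¹ * q, hq'sos, hq'deg, hq'feas, rfl⟩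
    -- the value of the scaled polynomial
    have hIGmqw : IntegrableOn (fun x =>
        (MvPolynomial.eval (fun i => x i) gP - F a) *
        MvPolynomial.eval (fun i => x i) q * w x) K :=
      Stmt9Aux.integrableOn_cmul hKc
        (((Stmt9Aux.cont_eval gP).sub continuous_const).mul (Stmt9Aux.cont_eval q)) hwint
    have hIGqw : IntegrableOn (fun x =>
        (MvPolynomial.eval (fun i => x i) gP) *
        MvPolynomial.eval (fun i => x i) q * w x) K :=
      Stmt9Aux.integrableOn_cmul hKc
        ((Stmt9Aux.cont_eval gP).mul (Stmt9Aux.cont_eval q)) hwint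
    have hIw : (∫ x in K, (MvPolynomial.eval (fun i => x i) gP - F a) *
        MvPolynomial.eval (fun i => x i) q * w x) ≤ t := by
      have s1 : (∫ x in K, (MvPolynomial.eval (fun i => x i) gP - F a) *
          MvPolynomial.eval (fun i => x i) q * w x) ≤
          ∫ x in K, (MvPolynomial.eval (fun i => x i) gP - F a) *
            MvPolynomial.eval (fun i => x i) q * what x := by
        apply setIntegral_mono_ae_restrict hIGmqw (hIGmqwh.mono_set hsub)
        filter_upwards [ae_restrict_mem hKm, haeK K hKm subset_rfl] with x hxK hxi
        have h1 := hgmin x (hsub hxK)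
        have h2 := hqnn x
        have h3 := hdom x hxi
        have h4 : 0 ≤ (MvPolynomial.eval (fun i => x i) gP - F a) *
            MvPolynomial.eval (fun i => x i) q := mul_nonneg (by linarith) h2
        exact mul_le_mul_of_nonneg_left h3 h4
      have s2 : (∫ x in K, (MvPolynomial.eval (fun i => x i) gP - F a) *
          MvPolynomial.eval (fun i => x i) q * what x) ≤
          ∫ x in Khat, (MvPolynomial.eval (fun i => x i) gP - F a) *
            MvPolynomial.eval (fun i => x i) q * what x :=
        setIntegral_mono_set hIGmqwh hGmqwh_ae0 hsub.eventuallyLE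
      rw [hteq] at s2
      linarith
    have hval : (∫ x in K, (MvPolynomial.eval (fun i => x i) gP) *
        MvPolynomial.eval (fun i => x i) (MvPolynomial.C c⁻¹ * q) * w x) ≤
        F a + (2 / ma) * t := by
      have heq : ∀ x : EuclideanSpace ℝ (Fin n),
          (MvPolynomial.eval (fun i => x i) gP) *
            MvPolynomial.eval (fun i => x i) (MvPolynomial.C c⁻¹ * q) * w x =
          c⁻¹ * ((MvPolynomial.eval (fun i => x i) gP) *
            MvPolynomial.eval (fun i => x i) q * w x) := by
        intro x; rw [hq'eval]; ring
      simp only [heq]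
      rw [integral_const_mul]
      have hIK_eq : (∫ x in K, (MvPolynomial.eval (fun i => x i) gP) *
          MvPolynomial.eval (fun i => x i) q * w x) =
          (∫ x in K, (MvPolynomial.eval (fun i => x i) gP - F a) *
            MvPolynomial.eval (fun i => x i) q * w x) + F a * c := by
        have heq2 : ∀ x : EuclideanSpace ℝ (Fin n),
            (MvPolynomial.eval (fun i => x i) gP - F a) *
              MvPolynomial.eval (fun i => x i) q * w x =
            (MvPolynomial.eval (fun i => x i) gP) *
              MvPolynomial.eval (fun i => x i) q * w x -
            F a * (MvPolynomial.eval (fun i => x i) q * w x) := by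
          intro x; ring
        simp only [heq2]
        rw [integral_sub hIGqw (hIqwK.const_mul (F a)), integral_const_mul, ← hc_def]
        ring
      rw [hIK_eq]
      have hIw0 : 0 ≤ ∫ x in K, (MvPolynomial.eval (fun i => x i) gP - F a) *
          MvPolynomial.eval (fun i => x i) q * w x := by
        apply setIntegral_nonneg_of_ae_restrict
        filter_upwards [ae_restrict_mem hKm, haeK K hKm subset_rfl] with x hxK hxi
        exact mul_nonneg (mul_nonneg (sub_nonneg.2 (hgmin x (hsub hxK))) (hqnn x))
          (hwpos x hxi).le
      have hcinv : c⁻¹ ≤ 2 / ma := by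
        rw [div_eq_mul_inv]
        have h1 : c⁻¹ ≤ (ma / 2)⁻¹ := by
          apply inv_anti₀ (by linarith) hc_half
        have h2 : (ma / 2)⁻¹ = 2 * ma⁻¹ := by
          rw [← one_div, one_div_div]
          field_simp
        linarith [h1, h2.le]
      calc c⁻¹ * ((∫ x in K, (MvPolynomial.eval (fun i => x i) gP - F a) *
            MvPolynomial.eval (fun i => x i) q * w x) + F a * c) =
          c⁻¹ * (∫ x in K, (MvPolynomial.eval (fun i => x i) gP - F a) *
            MvPolynomial.eval (fun i => x i) q * w x) + F a := by
            field_simp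
        _ ≤ c⁻¹ * t + F a := by
            have := mul_le_mul_of_nonneg_left hIw (inv_nonneg.2 hcpos.le)
            linarith
        _ ≤ (2 / ma) * t + F a := by
            have := mul_le_mul_of_nonneg_right hcinv ht0
            linarith
        _ = F a + (2 / ma) * t := by ring
    calc lasserre r K w (fun x => MvPolynomial.eval (fun i => x i) gP) ≤
        ∫ x in K, (MvPolynomial.eval (fun i => x i) gP) *
          MvPolynomial.eval (fun i => x i) (MvPolynomial.C c⁻¹ * q) * w x := hLle
      _ ≤ F a + (2 / ma) * t := hval
  -- conclude using core
  have hqsdeg : qs.totalDegree ≤ 2 * r := le_trans hr (by omega)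
  have hvstar_mem : vstar ∈ { v : ℝ | ∃ q : MvPolynomial (Fin n) ℝ, IsSOS q ∧
      q.totalDegree ≤ 2 * r ∧
      (∫ x in Khat, MvPolynomial.eval (fun i => x i) q * what x) = 1 ∧
      v = ∫ x in Khat, (fun x => MvPolynomial.eval (fun i => x i) gP) x *
        MvPolynomial.eval (fun i => x i) q * what x } :=
    ⟨qs, hqss, hqsdeg, hqs_feas, by rw [hvstar_def]⟩
  have hall : ∀ v ∈ { v : ℝ | ∃ q : MvPolynomial (Fin n) ℝ, IsSOS q ∧
      q.totalDegree ≤ 2 * r ∧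
      (∫ x in Khat, MvPolynomial.eval (fun i => x i) q * what x) = 1 ∧
      v = ∫ x in Khat, (fun x => MvPolynomial.eval (fun i => x i) gP) x *
        MvPolynomial.eval (fun i => x i) q * what x },
      lasserre r K w (fun x => MvPolynomial.eval (fun i => x i) gP) ≤
        F a + (2 / ma) * (v - F a) := by
    rintro v ⟨q, hs, hd, hf1, rfl⟩
    by_cases hcase : (∫ x in Khat, (fun x => MvPolynomial.eval (fun i => x i) gP) x *
        MvPolynomial.eval (fun i => x i) q * what x) - F a ≤ δ / 2
    · exact core q hs hd hf1 hcase
    · push_neg at hcase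
      have h1 := core qs hqss hqsdeg hqs_feas (by rw [← hvstar_def]; exact hvstar_le)
      rw [← hvstar_def] at h1
      have h2 : vstar - F a ≤ (∫ x in Khat,
          (fun x => MvPolynomial.eval (fun i => x i) gP) x *
          MvPolynomial.eval (fun i => x i) q * what x) - F a := by
        linarith [hvstar_le, hcase]
      have h3 : (2 / ma) * (vstar - F a) ≤ (2 / ma) * ((∫ x in Khat,
          (fun x => MvPolynomial.eval (fun i => x i) gP) x *
          MvPolynomial.eval (fun i => x i) q * what x) - F a) :=
        mul_le_mul_of_nonneg_left h2 (by positivity)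
      linarith
  have hRlb : F a + (ma / 2) *
      (lasserre r K w (fun x => MvPolynomial.eval (fun i => x i) gP) - F a) ≤
      lasserre r Khat what (fun x => MvPolynomial.eval (fun i => x i) gP) := by
    conv_rhs => rw [lasserre]
    apply le_csInf ⟨vstar, hvstar_mem⟩
    intro v hv
    have h1 := hall v hv
    have h2 : (ma / 2) *
        (lasserre r K w (fun x => MvPolynomial.eval (fun i => x i) gP) - F a) ≤
        (ma / 2) * ((2 / ma) * (v - F a)) :=
      mul_le_mul_of_nonneg_left (by linarith) (by positivity)
    have h3 : (ma / 2) * ((2 / ma) * (v - F a)) = v - F a := by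
      field_simp
    linarith
  have hfin : (ma / 2) *
      (lasserre r K w (fun x => MvPolynomial.eval (fun i => x i) gP) - F a) ≤
      lasserre r Khat what (fun x => MvPolynomial.eval (fun i => x i) gP) - F a := by
    linarith
  have h4 := mul_le_mul_of_nonneg_left hfin (le_of_lt (by positivity : (0:ℝ) < 2 / ma))
  have h5 : (2 / ma) * ((ma / 2) *
      (lasserre r K w (fun x => MvPolynomial.eval (fun i => x i) gP) - F a)) =
      lasserre r K w (fun x => MvPolynomial.eval (fun i => x i) gP) - F a := by
    field_simp
  linarith
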